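/- arXiv:2310.01439 — 3 statements merged into one kernel-verified Lean document; each statement's English description precedes it below -/
import Mathlib

section
/- Let H be a finite nonempty set, let φ : H → ℝ be any function, and let p and q be probability distributions on H with q absolutely continuous with respect to p (i.e., p(h) > 0 whenever q(h) > 0). Then Σ_{h∈H} q(h)·φ(h) − log( Σ_{h∈H} p(h)·exp(φ(h)) ) ≤ KL(q ‖ p). -/
/-- Compression lemma (Banerjee): for probability distributions `q` and `p` on a
finite nonempty set `H` with `q` absolutely continuous w.r.t. `p`, and any
`φ : H → ℝ`, we have `E_q[φ] - log E_p[exp φ] ≤ KL(q ‖ p)`. -/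
theorem compression_lemma
    {H : Type*} [Fintype H] [Nonempty H]
    (φ : H → ℝ) (p q : H → ℝ)
    (hp_nonneg : ∀ h, 0 ≤ p h) (hp_sum : ∑ h, p h = 1)
    (hq_nonneg : ∀ h, 0 ≤ q h) (hq_sum : ∑ h, q h = 1)
    (habs : ∀ h, 0 < q h → 0 < p h) :
    (∑ h, q h * φ h) - Real.log (∑ h, p h * Real.exp (φ h))
      ≤ ∑ h, q h * Real.log (q h / p h) := by
  classical
  set S : Finset H := Finset.univ.filter (fun h => 0 < q h) with hS
  have hmemS : ∀ h, h ∈ S ↔ 0 < q h := by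
    intro h; simp [hS]
  have hq0 : ∀ h ∉ S, q h = 0 := by
    intro h hh
    have : ¬ 0 < q h := by simpa [hmemS] using hh
    exact le_antisymm (not_lt.mp this) (hq_nonneg h)
  have hqS : ∑ h ∈ S, q h = 1 := by
    rw [← hq_sum]
    exact Finset.sum_subset (Finset.subset_univ S) (fun h _ hh => hq0 h hh)
  -- positivity of restricted partition function
  have hSne : S.Nonempty := by
    by_contra hc
    rw [Finset.not_nonempty_iff_eq_empty] at hc
    simp [hc] at hqS
  have hZ'pos : 0 < ∑ h ∈ S, p h * Real.exp (φ h) := by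
    apply Finset.sum_pos
    · intro h hh
      exact mul_pos (habs h ((hmemS h).1 hh)) (Real.exp_pos _)
    · exact hSne
  have hZ'Z : (∑ h ∈ S, p h * Real.exp (φ h)) ≤ ∑ h, p h * Real.exp (φ h) :=
    Finset.sum_le_sum_of_subset_of_nonneg (Finset.subset_univ S)
      (fun h _ _ => mul_nonneg (hp_nonneg h) (Real.exp_pos _).le)
  -- Jensen's inequality for log
  have jensen : ∑ h ∈ S, q h * Real.log (p h * Real.exp (φ h) / q h)
      ≤ Real.log (∑ h ∈ S, q h * (p h * Real.exp (φ h) / q h)) := by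
    have := (strictConcaveOn_log_Ioi.concaveOn).le_map_sum
      (t := S) (w := q) (p := fun h => p h * Real.exp (φ h) / q h)
      (fun h _ => hq_nonneg h) hqS
      (fun h hh => Set.mem_Ioi.mpr
        (div_pos (mul_pos (habs h ((hmemS h).1 hh)) (Real.exp_pos _)) ((hmemS h).1 hh)))
    simpa [smul_eq_mul] using this
  have hsum_eq : ∑ h ∈ S, q h * (p h * Real.exp (φ h) / q h)
      = ∑ h ∈ S, p h * Real.exp (φ h) := by
    apply Finset.sum_congr rfl
    intro h hh
    rw [mul_div_cancel₀ _ (ne_of_gt ((hmemS h).1 hh))]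
  rw [hsum_eq] at jensen
  -- rewrite LHS over support
  have hL1 : ∑ h, q h * φ h = ∑ h ∈ S, q h * φ h :=
    (Finset.sum_subset (Finset.subset_univ S) (fun h _ hh => by simp [hq0 h hh])).symm
  have hL2 : ∑ h, q h * Real.log (q h / p h) = ∑ h ∈ S, q h * Real.log (q h / p h) :=
    (Finset.sum_subset (Finset.subset_univ S) (fun h _ hh => by simp [hq0 h hh])).symm
  have hterm : ∑ h ∈ S, q h * φ h - ∑ h ∈ S, q h * Real.log (q h / p h)
      = ∑ h ∈ S, q h * Real.log (p h * Real.exp (φ h) / q h) := by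
    rw [← Finset.sum_sub_distrib]
    apply Finset.sum_congr rfl
    intro h hh
    have hq : 0 < q h := (hmemS h).1 hh
    have hp : 0 < p h := habs h hq
    rw [Real.log_div (by positivity) (ne_of_gt hq),
      Real.log_mul (ne_of_gt hp) (Real.exp_ne_zero _), Real.log_exp,
      Real.log_div (ne_of_gt hq) (ne_of_gt hp)]
    ring
  have hlog : Real.log (∑ h ∈ S, p h * Real.exp (φ h))
      ≤ Real.log (∑ h, p h * Real.exp (φ h)) := Real.log_le_log hZ'pos hZ'Z
  have := le_trans (le_trans (le_of_eq hterm) jensen) hlog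
  rw [hL1, hL2]
  linarith
end

section
/- Let K be a finite nonempty set, let η > 0 and B ≥ 0, let ℓ : K → ℝ satisfy 0 ≤ ℓ(k) ≤ B for all k ∈ K, and let p and q be probability distributions on K with q absolutely continuous with respect to p. Then Σ_{k∈K} p(k)·ℓ(k) ≤ Σ_{k∈K} q(k)·ℓ(k) + (1/η)·KL(q ‖ p) + η·B²/8. -/
open Real Finset

/-- Core Hoeffding inequality: `log(1 - α + α eˢ) ≤ α s + s²/8` for `α ∈ [0,1]`. -/
lemma hoeff_log {α : ℝ} (h0 : 0 ≤ α) (h1 : α ≤ 1) (s : ℝ) :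
    Real.log (1 - α + α * Real.exp s) ≤ α * s + s ^ 2 / 8 := by
  set g : ℝ → ℝ := fun s => 1 - α + α * Real.exp s with hgdef
  have hg : ∀ x, 0 < g x := by
    intro x
    rcases lt_or_eq_of_le h1 with h | h
    · have := Real.exp_pos x
      have : 0 ≤ α * Real.exp x := mul_nonneg h0 (Real.exp_pos x).le
      simp only [g]; linarith
    · have := Real.exp_pos x
      simp only [g, ← h]; nlinarith
  have hgd : ∀ x, HasDerivAt g (α * Real.exp x) x := fun x =>
    (((Real.hasDerivAt_exp x).const_mul α)).const_add (1 - α)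
  set f : ℝ → ℝ := fun x => α * x + x ^ 2 / 8 - Real.log (g x) with hfdef
  set f' : ℝ → ℝ := fun x => α + x / 4 - α * Real.exp x / g x with hf'def
  have hfd : ∀ x, HasDerivAt f (f' x) x := by
    intro x
    have h1' : HasDerivAt (fun x : ℝ => α * x + x ^ 2 / 8) (α + x / 4) x := by
      have ha : HasDerivAt (fun x : ℝ => α * x) α x := by
        simpa using (hasDerivAt_id x).const_mul α
      have hb : HasDerivAt (fun x : ℝ => x ^ 2 / 8) (x / 4) x := by
        have := (hasDerivAt_pow 2 x).div_const 8
        exact this.congr_deriv (by norm_num; ring)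
      exact ha.add hb
    have h2' : HasDerivAt (fun x => Real.log (g x)) (α * Real.exp x / g x) x :=
      (hgd x).log (hg x).ne'
    exact h1'.sub h2'
  have hf'd : ∀ x, HasDerivAt f'
      (1 / 4 - (α * Real.exp x * g x - α * Real.exp x * (α * Real.exp x)) / (g x) ^ 2) x := by
    intro x
    have hc : HasDerivAt (fun x : ℝ => α + x / 4) (1 / 4) x := by
      simpa using ((hasDerivAt_id x).div_const 4).const_add α
    have hq : HasDerivAt (fun x => α * Real.exp x / g x)
        ((α * Real.exp x * g x - α * Real.exp x * (α * Real.exp x)) / (g x) ^ 2) x :=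
      ((Real.hasDerivAt_exp x).const_mul α).div (hgd x) (hg x).ne'
    exact hc.sub hq
  have hf''_nonneg : ∀ x, 0 ≤ 1 / 4 -
      (α * Real.exp x * g x - α * Real.exp x * (α * Real.exp x)) / (g x) ^ 2 := by
    intro x
    set u : ℝ := α * Real.exp x / g x with hu
    have hgx := hg x
    have hrw : (α * Real.exp x * g x - α * Real.exp x * (α * Real.exp x)) / (g x) ^ 2
        = u - u ^ 2 := by
      rw [hu]; field_simp
    rw [hrw]; nlinarith [sq_nonneg (u - 1/2)]
  have hf'mono : Monotone f' := by
    apply monotone_of_deriv_nonneg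
    · exact fun x => (hf'd x).differentiableAt
    · intro x; rw [(hf'd x).deriv]; exact hf''_nonneg x
  have hg0 : g 0 = 1 := by simp [g]
  have hf'0 : f' 0 = 0 := by simp [f', hg0]
  have hf0 : f 0 = 0 := by simp [f, hg0]
  have hdiff : Differentiable ℝ f := fun x => (hfd x).differentiableAt
  have key : 0 ≤ f s := by
    rcases le_or_gt 0 s with hs | hs
    · have hmono : MonotoneOn f (Set.Ici 0) := by
        apply monotoneOn_of_deriv_nonneg (convex_Ici 0) hdiff.continuous.continuousOn
          hdiff.differentiableOn
        intro x hx
        rw [interior_Ici, Set.mem_Ioi] at hx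
        rw [(hfd x).deriv]
        have := hf'mono hx.le
        rw [hf'0] at this; exact this
      have := hmono (Set.self_mem_Ici) (Set.mem_Ici.2 hs) hs
      rwa [hf0] at this
    · have hanti : AntitoneOn f (Set.Iic 0) := by
        apply antitoneOn_of_deriv_nonpos (convex_Iic 0) hdiff.continuous.continuousOn
          hdiff.differentiableOn
        intro x hx
        rw [interior_Iic, Set.mem_Iio] at hx
        rw [(hfd x).deriv]
        have := hf'mono hx.le
        rw [hf'0] at this; exact this
      have := hanti (Set.mem_Iic.2 hs.le) Set.self_mem_Iic hs.le
      rwa [hf0] at this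
  have : Real.log (g s) ≤ α * s + s ^ 2 / 8 := by simp only [f] at key; linarith
  simpa [g] using this

/-- Hoeffding's lemma for a finite probability distribution. -/
lemma hoeff_sum {K : Type*} [Fintype K] (p ℓ : K → ℝ)
    (hp : ∀ k, 0 ≤ p k) (hpsum : ∑ k, p k = 1)
    (B t : ℝ) (hB : 0 < B) (hℓ : ∀ k, 0 ≤ ℓ k ∧ ℓ k ≤ B) :
    Real.log (∑ k, p k * Real.exp (t * ℓ k))
      ≤ t * (∑ k, p k * ℓ k) + t ^ 2 * B ^ 2 / 8 := by
  set μ : ℝ := ∑ k, p k * ℓ k with hμ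
  have hμ0 : 0 ≤ μ := Finset.sum_nonneg fun k _ => mul_nonneg (hp k) (hℓ k).1
  have hμB : μ ≤ B := by
    calc μ ≤ ∑ k, p k * B := Finset.sum_le_sum fun k _ =>
            mul_le_mul_of_nonneg_left (hℓ k).2 (hp k)
    _ = B := by rw [← Finset.sum_mul, hpsum, one_mul]
  set α : ℝ := μ / B with hα
  have hα0 : 0 ≤ α := div_nonneg hμ0 hB.le
  have hα1 : α ≤ 1 := (div_le_one hB).2 hμB
  -- pointwise convexity bound
  have hpt : ∀ k, Real.exp (t * ℓ k) ≤ (1 - ℓ k / B) + ℓ k / B * Real.exp (t * B) := by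
    intro k
    have hl0 := (hℓ k).1
    have hlB := (hℓ k).2
    have hlam0 : 0 ≤ ℓ k / B := div_nonneg hl0 hB.le
    have hlam1 : ℓ k / B ≤ 1 := (div_le_one hB).2 hlB
    have := convexOn_exp.2 (Set.mem_univ (0:ℝ)) (Set.mem_univ (t * B))
      (by linarith : (0:ℝ) ≤ 1 - ℓ k / B) hlam0 (by ring)
    simp only [smul_eq_mul, mul_zero, zero_add] at this
    have harg : ℓ k / B * (t * B) = t * ℓ k := by field_simp
    rw [harg, Real.exp_zero, mul_one] at this
    linarith
  have hsum_le : (∑ k, p k * Real.exp (t * ℓ k)) ≤ 1 - α + α * Real.exp (t * B) := by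
    calc (∑ k, p k * Real.exp (t * ℓ k))
        ≤ ∑ k, p k * ((1 - ℓ k / B) + ℓ k / B * Real.exp (t * B)) :=
          Finset.sum_le_sum fun k _ => mul_le_mul_of_nonneg_left (hpt k) (hp k)
      _ = (∑ k, p k) - (∑ k, p k * ℓ k) / B + (∑ k, p k * ℓ k) / B * Real.exp (t * B) := by
          have expand : ∀ k : K, p k * ((1 - ℓ k / B) + ℓ k / B * Real.exp (t * B))
              = p k - (p k * ℓ k) / B + (p k * ℓ k) / B * Real.exp (t * B) := fun k => by ring
          rw [Finset.sum_congr rfl (fun k _ => expand k), Finset.sum_add_distrib,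
            Finset.sum_sub_distrib, ← Finset.sum_mul, ← Finset.sum_div]
      _ = 1 - α + α * Real.exp (t * B) := by rw [hpsum, hα, hμ]
  have hZpos : 0 < ∑ k, p k * Real.exp (t * ℓ k) := by
    obtain ⟨k0, hk0⟩ : ∃ k, p k ≠ 0 := by
      by_contra h
      push_neg at h
      rw [Finset.sum_eq_zero (fun k _ => h k)] at hpsum
      norm_num at hpsum
    have hk0' : 0 < p k0 := (hp k0).lt_of_ne (Ne.symm hk0)
    have : 0 < p k0 * Real.exp (t * ℓ k0) := mul_pos hk0' (Real.exp_pos _)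
    calc (0:ℝ) < p k0 * Real.exp (t * ℓ k0) := this
      _ ≤ _ := Finset.single_le_sum (f := fun k => p k * Real.exp (t * ℓ k))
          (fun k _ => mul_nonneg (hp k) (Real.exp_pos _).le) (Finset.mem_univ k0)
  calc Real.log (∑ k, p k * Real.exp (t * ℓ k))
      ≤ Real.log (1 - α + α * Real.exp (t * B)) := Real.log_le_log hZpos hsum_le
    _ ≤ α * (t * B) + (t * B) ^ 2 / 8 := hoeff_log hα0 hα1 (t * B)
    _ = t * μ + t ^ 2 * B ^ 2 / 8 := by rw [hα]; field_simp

/-- Compression (Donsker–Varadhan) lemma for finite distributions. -/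
lemma compression_lemma_s3 {K : Type*} [Fintype K] (p q φ : K → ℝ)
    (hp : ∀ k, 0 ≤ p k) (hpsum : ∑ k, p k = 1)
    (hq : ∀ k, 0 ≤ q k) (hqsum : ∑ k, q k = 1)
    (habs : ∀ k, 0 < q k → 0 < p k) :
    (∑ k, q k * φ k)
      ≤ (∑ k, q k * Real.log (q k / p k)) + Real.log (∑ k, p k * Real.exp (φ k)) := by
  set Z : ℝ := ∑ k, p k * Real.exp (φ k) with hZdef
  have hZpos : 0 < Z := by
    obtain ⟨k0, hk0⟩ : ∃ k, p k ≠ 0 := by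
      by_contra h
      push_neg at h
      rw [Finset.sum_eq_zero (fun k _ => h k)] at hpsum
      norm_num at hpsum
    have hk0' : 0 < p k0 := (hp k0).lt_of_ne (Ne.symm hk0)
    calc (0:ℝ) < p k0 * Real.exp (φ k0) := mul_pos hk0' (Real.exp_pos _)
      _ ≤ Z := Finset.single_le_sum
          (fun k _ => mul_nonneg (hp k) (Real.exp_pos _).le) (Finset.mem_univ k0)
  set S : Finset K := Finset.univ.filter (fun k => 0 < q k) with hSdef
  have hqS : ∀ k ∈ S, 0 < q k := fun k hk => (Finset.mem_filter.1 hk).2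
  have hoffS : ∀ k ∈ Finset.univ, k ∉ S → q k = 0 := by
    intro k _ hk
    by_contra h
    exact hk (Finset.mem_filter.2 ⟨Finset.mem_univ k, (hq k).lt_of_ne (Ne.symm h)⟩)
  have hqsumS : ∑ k ∈ S, q k = 1 := by
    rw [← hqsum]
    exact Finset.sum_subset (Finset.subset_univ S) (fun k hk hk' => hoffS k hk hk')
  have hsum1 : (∑ k, q k * φ k) = ∑ k ∈ S, q k * φ k :=
    (Finset.sum_subset (Finset.subset_univ S)
      (fun k hk hk' => by rw [hoffS k hk hk', zero_mul])).symm
  have hsum2 : (∑ k, q k * Real.log (q k / p k)) = ∑ k ∈ S, q k * Real.log (q k / p k) :=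
    (Finset.sum_subset (Finset.subset_univ S)
      (fun k hk hk' => by rw [hoffS k hk hk', zero_mul])).symm
  have key : ∀ k ∈ S, q k * φ k - q k * Real.log (q k / p k) - q k * Real.log Z
      ≤ p k * Real.exp (φ k) / Z - q k := by
    intro k hk
    have hqk := hqS k hk
    have hpk := habs k hqk
    set x : ℝ := p k * Real.exp (φ k) / (q k * Z) with hx
    have hxpos : 0 < x := div_pos (mul_pos hpk (Real.exp_pos _)) (mul_pos hqk hZpos)
    have hlog := Real.log_le_sub_one_of_pos hxpos
    have hlogx : Real.log x = φ k - Real.log (q k / p k) - Real.log Z := by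
      rw [hx, Real.log_div (mul_pos hpk (Real.exp_pos _)).ne' (mul_pos hqk hZpos).ne',
        Real.log_mul hpk.ne' (Real.exp_pos _).ne', Real.log_mul hqk.ne' hZpos.ne',
        Real.log_exp, Real.log_div hqk.ne' hpk.ne']
      ring
    have h1 : q k * Real.log x ≤ q k * (x - 1) :=
      mul_le_mul_of_nonneg_left hlog hqk.le
    have h2 : q k * (x - 1) = p k * Real.exp (φ k) / Z - q k := by
      rw [hx]; field_simp
    rw [hlogx] at h1
    rw [h2] at h1
    linarith [h1]
  have hsumS : ∑ k ∈ S, (q k * φ k - q k * Real.log (q k / p k) - q k * Real.log Z)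
      ≤ ∑ k ∈ S, (p k * Real.exp (φ k) / Z - q k) := Finset.sum_le_sum key
  have hrhs : ∑ k ∈ S, (p k * Real.exp (φ k) / Z - q k) ≤ 0 := by
    rw [Finset.sum_sub_distrib, hqsumS, ← Finset.sum_div]
    have : ∑ k ∈ S, p k * Real.exp (φ k) ≤ Z := by
      rw [hZdef]
      exact Finset.sum_le_sum_of_subset_of_nonneg (Finset.subset_univ S)
        (fun k _ _ => mul_nonneg (hp k) (Real.exp_pos _).le)
    have h3 : (∑ k ∈ S, p k * Real.exp (φ k)) / Z ≤ 1 := (div_le_one hZpos).2 this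
    linarith
  have hlhs : ∑ k ∈ S, (q k * φ k - q k * Real.log (q k / p k) - q k * Real.log Z)
      = (∑ k, q k * φ k) - (∑ k, q k * Real.log (q k / p k)) - Real.log Z := by
    rw [Finset.sum_sub_distrib, Finset.sum_sub_distrib, ← Finset.sum_mul, hqsumS, one_mul,
      hsum1, hsum2]
  rw [hlhs] at hsumS
  have := le_trans hsumS hrhs
  linarith

/-- Single-time-step regret bound: for bounded losses `0 ≤ ℓ(k) ≤ B` and
probability distributions `p`, `q` with `q ≪ p`,
`E_p[ℓ] ≤ E_q[ℓ] + (1/η) KL(q ‖ p) + η B² / 8`. -/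
theorem single_step_regret_bound
    {K : Type*} [Fintype K] [Nonempty K]
    (η B : ℝ) (hη : 0 < η) (hB : 0 ≤ B)
    (ℓ : K → ℝ) (hℓ : ∀ k, 0 ≤ ℓ k ∧ ℓ k ≤ B)
    (p q : K → ℝ)
    (hp_nonneg : ∀ k, 0 ≤ p k) (hp_sum : ∑ k, p k = 1)
    (hq_nonneg : ∀ k, 0 ≤ q k) (hq_sum : ∑ k, q k = 1)
    (habs : ∀ k, 0 < q k → 0 < p k) :
    (∑ k, p k * ℓ k)
      ≤ (∑ k, q k * ℓ k) + (1 / η) * (∑ k, q k * Real.log (q k / p k))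
        + η * B ^ 2 / 8 := by
  set KL : ℝ := ∑ k, q k * Real.log (q k / p k) with hKL
  rcases eq_or_lt_of_le hB with hB0 | hBpos
  · -- B = 0 case: ℓ = 0, reduces to 0 ≤ KL
    have hl0 : ∀ k, ℓ k = 0 := fun k => le_antisymm (hB0 ▸ (hℓ k).2) (hℓ k).1
    have hKL0 : 0 ≤ KL := by
      have := compression_lemma_s3 p q (fun _ => 0) hp_nonneg hp_sum hq_nonneg hq_sum habs
      rw [hKL]
      simpa [hp_sum] using this
    simp only [hl0, mul_zero, Finset.sum_const_zero, ← hB0]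
    have h1 : 0 ≤ η⁻¹ * KL := mul_nonneg (by positivity) hKL0
    norm_num
    linarith
  · have hcomp := compression_lemma_s3 p q (fun k => -η * ℓ k) hp_nonneg hp_sum hq_nonneg hq_sum habs
    have hhoeff := hoeff_sum p ℓ hp_nonneg hp_sum B (-η) hBpos hℓ
    rw [← hKL] at hcomp
    have h1 : ∑ k, q k * (-η * ℓ k) = -η * ∑ k, q k * ℓ k := by
      rw [Finset.mul_sum]; apply Finset.sum_congr rfl; intro k _; ring
    rw [h1] at hcomp
    have hmain : -η * (∑ k, q k * ℓ k) ≤ KL + ((-η) * (∑ k, p k * ℓ k) + (-η)^2 * B^2/8) := by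
      calc -η * (∑ k, q k * ℓ k) ≤ KL + Real.log (∑ k, p k * Real.exp (-η * ℓ k)) := hcomp
        _ ≤ _ := by linarith [hhoeff]
    rw [neg_sq] at hmain
    have hfin : η * (∑ k, p k * ℓ k)
        ≤ η * ((∑ k, q k * ℓ k) + (1/η) * KL + η * B^2/8) := by
      have hη' : η ≠ 0 := hη.ne'
      have e : η * ((∑ k, q k * ℓ k) + (1/η) * KL + η * B^2/8)
          = η * (∑ k, q k * ℓ k) + KL + η^2 * B^2/8 := by
        field_simp
      rw [e]
      linarith
    exact le_of_mul_le_mul_left hfin hη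
end

section
/- Let K be a finite nonempty set, let T be a positive natural number, let η > 0 and B ≥ 0, let ℓ_t : K → ℝ for t = 0, …, T−1 satisfy 0 ≤ ℓ_t(k) ≤ B for all t and k, let p_0, …, p_{T−1} be probability distributions on K, and let q be a probability distribution on K that is absolutely continuous with respect to each p_t. Then Σ_{t=0}^{T−1} Σ_{k∈K} p_t(k)·ℓ_t(k) ≤ Σ_{t=0}^{T−1} Σ_{k∈K} q(k)·ℓ_t(k) + (1/η)·Σ_{t=0}^{T−1} KL(q ‖ p_t) + T·η·B²/8. -/
open Real Finset


/-- Key scalar inequality (Hoeffding-type). -/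
lemma hoeffding_scalar (s : ℝ) (hs0 : 0 ≤ s) (hs1 : s ≤ 1) (u : ℝ) (hu : u ≤ 0) :
    Real.log (1 - s + s * Real.exp u) ≤ s * u + u ^ 2 / 8 := by
  set D : ℝ → ℝ := fun x => 1 - s + s * Real.exp x with hDdef
  have hD : ∀ x, 0 < D x := by
    intro x
    rcases eq_or_lt_of_le hs0 with h | h
    · simp [hDdef, ← h]
    · have := Real.exp_pos x
      have : 0 < s * Real.exp x := by positivity
      simp only [hDdef]
      nlinarith
  set f : ℝ → ℝ := fun x => s * x + x ^ 2 / 8 - Real.log (D x) with hfdef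
  set g : ℝ → ℝ := fun x => s + x / 4 - s * Real.exp x / D x with hgdef
  have hDderiv : ∀ x, HasDerivAt D (s * Real.exp x) x := by
    intro x
    exact ((Real.hasDerivAt_exp x).const_mul s).const_add (1 - s)
  have hf : ∀ x, HasDerivAt f (g x) x := by
    intro x
    have h1 : HasDerivAt (fun y : ℝ => s * y) s x := by
      simpa using (hasDerivAt_id x).const_mul s
    have h2 : HasDerivAt (fun y : ℝ => y ^ 2 / 8) (x / 4) x := by
      have := (hasDerivAt_pow 2 x).div_const 8
      refine this.congr_deriv ?_
      simp; ring
    have h3 : HasDerivAt (fun y => Real.log (D y)) (s * Real.exp x / D x) x :=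
      (hDderiv x).log (hD x).ne'
    exact (h1.add h2).sub h3
  have hg : ∀ x, HasDerivAt g (1 / 4 - s * (1 - s) * Real.exp x / (D x) ^ 2) x := by
    intro x
    have h1 : HasDerivAt (fun y : ℝ => s + y / 4) (1 / 4) x := by
      simpa using ((hasDerivAt_id x).div_const 4).const_add s
    have h2 : HasDerivAt (fun y => s * Real.exp y / D y)
        ((s * Real.exp x * D x - s * Real.exp x * (s * Real.exp x)) / (D x) ^ 2) x :=
      ((Real.hasDerivAt_exp x).const_mul s).div (hDderiv x) (hD x).ne'
    have := h1.sub h2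
    refine this.congr_deriv ?_
    have hDx : D x = 1 - s + s * Real.exp x := rfl
    rw [hDx]
    ring
  have hgderiv_nonneg : ∀ x, 0 ≤ 1 / 4 - s * (1 - s) * Real.exp x / (D x) ^ 2 := by
    intro x
    rw [sub_nonneg, div_le_iff₀ (pow_pos (hD x) 2)]
    have hDx : D x = 1 - s + s * Real.exp x := rfl
    nlinarith [sq_nonneg (1 - s - s * Real.exp x), Real.exp_pos x]
  have hgmono : Monotone g := by
    apply monotone_of_deriv_nonneg (fun x => (hg x).differentiableAt)
    intro x
    rw [(hg x).deriv]
    exact hgderiv_nonneg x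
  have hg0 : g 0 = 0 := by
    simp [hgdef, hDdef]
  have hanti : AntitoneOn f (Set.Iic 0) := by
    apply antitoneOn_of_deriv_nonpos (convex_Iic 0)
    · exact Continuous.continuousOn (by
        fun_prop (disch := intro x; exact (hD x).ne'))
    · intro x _
      exact (hf x).differentiableAt.differentiableWithinAt
    · intro x hx
      rw [interior_Iic] at hx
      rw [(hf x).deriv]
      have : g x ≤ g 0 := hgmono (le_of_lt hx)
      linarith [hg0 ▸ this]
  have hf0 : f 0 = 0 := by simp [hfdef, hDdef]
  have := hanti (Set.mem_Iic.mpr hu) (Set.mem_Iic.mpr le_rfl) hu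
  rw [hf0] at this
  simp only [hfdef] at this
  linarith


section
variable {K : Type*} [Fintype K]

/-- Gibbs inequality / variational bound. -/
lemma gibbs_bound (η : ℝ) (hη : 0 < η) (ℓ p q : K → ℝ)
    (hp_nonneg : ∀ k, 0 ≤ p k) (hp_sum : ∑ k, p k = 1)
    (hq_nonneg : ∀ k, 0 ≤ q k) (hq_sum : ∑ k, q k = 1)
    (habs : ∀ k, 0 < q k → 0 < p k) :
    -η * ∑ k, q k * ℓ k - Real.log (∑ k, p k * Real.exp (-η * ℓ k))
      ≤ ∑ k, q k * Real.log (q k / p k) := by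
  set Z : ℝ := ∑ k, p k * Real.exp (-η * ℓ k) with hZdef
  -- some q k is positive
  obtain ⟨k0, hk0⟩ : ∃ k, 0 < q k := by
    by_contra h
    push_neg at h
    have : ∀ k, q k = 0 := fun k => le_antisymm (h k) (hq_nonneg k)
    simp [this] at hq_sum
  have hZpos : 0 < Z := by
    have hpk0 := habs k0 hk0
    apply Finset.sum_pos' (fun k _ => mul_nonneg (hp_nonneg k) (Real.exp_pos _).le)
    exact ⟨k0, Finset.mem_univ k0, mul_pos hpk0 (Real.exp_pos _)⟩
  -- termwise: q k * log (p k * exp(-η ℓ k) / (q k * Z)) ≤ p k * exp(-η ℓ k)/Z - q k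
  have key : ∀ k, q k * Real.log (p k * Real.exp (-η * ℓ k) / (q k * Z))
      ≤ p k * Real.exp (-η * ℓ k) / Z - q k := by
    intro k
    rcases eq_or_lt_of_le (hq_nonneg k) with h | h
    · rw [← h]
      simp
      exact div_nonneg (mul_nonneg (hp_nonneg k) (Real.exp_pos _).le) hZpos.le
    · have hpk := habs k h
      have hx : 0 < p k * Real.exp (-η * ℓ k) / (q k * Z) := by positivity
      have := Real.log_le_sub_one_of_pos hx
      have h2 : q k * Real.log (p k * Real.exp (-η * ℓ k) / (q k * Z))
          ≤ q k * (p k * Real.exp (-η * ℓ k) / (q k * Z) - 1) := by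
        exact mul_le_mul_of_nonneg_left this (le_of_lt h)
      calc q k * Real.log (p k * Real.exp (-η * ℓ k) / (q k * Z))
          ≤ q k * (p k * Real.exp (-η * ℓ k) / (q k * Z) - 1) := h2
        _ = p k * Real.exp (-η * ℓ k) / Z - q k := by
            field_simp
  have hsum := Finset.sum_le_sum (fun k (_ : k ∈ Finset.univ) => key k)
  have hrhs : ∑ k, (p k * Real.exp (-η * ℓ k) / Z - q k) = 0 := by
    rw [Finset.sum_sub_distrib, ← Finset.sum_div, ← hZdef, div_self hZpos.ne', hq_sum]
    norm_num
  rw [hrhs] at hsum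
  -- rewrite LHS of hsum termwise
  have hterm : ∀ k, q k * Real.log (p k * Real.exp (-η * ℓ k) / (q k * Z))
      = -(q k * Real.log (q k / p k)) - η * (q k * ℓ k) - q k * Real.log Z := by
    intro k
    rcases eq_or_lt_of_le (hq_nonneg k) with h | h
    · rw [← h]; ring
    · have hpk := habs k h
      rw [Real.log_div (by positivity) (by positivity),
        Real.log_mul hpk.ne' (Real.exp_pos _).ne',
        Real.log_mul h.ne' hZpos.ne', Real.log_exp,
        Real.log_div h.ne' hpk.ne']
      ring
  rw [Finset.sum_congr rfl (fun k _ => hterm k)] at hsum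
  simp only [Finset.sum_sub_distrib, Finset.sum_neg_distrib] at hsum
  rw [← Finset.mul_sum, ← Finset.sum_mul, hq_sum] at hsum
  linarith [hsum]


lemma step_bound (η B : ℝ) (hη : 0 < η) (hB : 0 ≤ B) (ℓ p q : K → ℝ)
    (hℓ : ∀ k, 0 ≤ ℓ k ∧ ℓ k ≤ B)
    (hp_nonneg : ∀ k, 0 ≤ p k) (hp_sum : ∑ k, p k = 1)
    (hq_nonneg : ∀ k, 0 ≤ q k) (hq_sum : ∑ k, q k = 1)
    (habs : ∀ k, 0 < q k → 0 < p k) :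
    ∑ k, p k * ℓ k ≤ ∑ k, q k * ℓ k + (1 / η) * ∑ k, q k * Real.log (q k / p k)
      + η * B ^ 2 / 8 := by
  set Z : ℝ := ∑ k, p k * Real.exp (-η * ℓ k) with hZdef
  have hZpos : 0 < Z := by
    obtain ⟨k0, hk0⟩ : ∃ k, 0 < p k := by
      by_contra h
      push_neg at h
      have : ∀ k, p k = 0 := fun k => le_antisymm (h k) (hp_nonneg k)
      simp [this] at hp_sum
    apply Finset.sum_pos' (fun k _ => mul_nonneg (hp_nonneg k) (Real.exp_pos _).le)
    exact ⟨k0, Finset.mem_univ k0, mul_pos hk0 (Real.exp_pos _)⟩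
  have hpl_nonneg : 0 ≤ ∑ k, p k * ℓ k :=
    Finset.sum_nonneg fun k _ => mul_nonneg (hp_nonneg k) (hℓ k).1
  have hhoeff : Real.log Z ≤ -η * ∑ k, p k * ℓ k + η ^ 2 * B ^ 2 / 8 := by
    rcases eq_or_lt_of_le hB with h | hBpos
    · have hz : ∀ k, ℓ k = 0 := fun k => le_antisymm (h ▸ (hℓ k).2) (hℓ k).1
      simp [hZdef, hz, hp_sum, ← h]
    · set m : ℝ := (∑ k, p k * ℓ k) / B with hmdef
      have hm0 : 0 ≤ m := div_nonneg hpl_nonneg hB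
      have hm1 : m ≤ 1 := by
        rw [hmdef, div_le_one hBpos]
        calc ∑ k, p k * ℓ k ≤ ∑ k, p k * B :=
              Finset.sum_le_sum fun k _ =>
                mul_le_mul_of_nonneg_left (hℓ k).2 (hp_nonneg k)
          _ = B := by rw [← Finset.sum_mul, hp_sum, one_mul]
      have hZle : Z ≤ 1 - m + m * Real.exp (-η * B) := by
        have hterm : ∀ k, p k * Real.exp (-η * ℓ k)
            ≤ p k * ((1 - ℓ k / B) + ℓ k / B * Real.exp (-η * B)) := by
          intro k
          apply mul_le_mul_of_nonneg_left _ (hp_nonneg k)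
          have ht0 : 0 ≤ ℓ k / B := div_nonneg (hℓ k).1 hB
          have ht1 : ℓ k / B ≤ 1 := by rw [div_le_one hBpos]; exact (hℓ k).2
          have hcv := convexOn_exp.2 (Set.mem_univ (0:ℝ)) (Set.mem_univ (-η * B))
            (by linarith : (0:ℝ) ≤ 1 - ℓ k / B) ht0 (by ring)
          simp only [smul_eq_mul] at hcv
          have harg : (1 - ℓ k / B) * 0 + ℓ k / B * (-η * B) = -η * ℓ k := by
            field_simp
            ring
          rw [harg] at hcv
          simpa using hcv
        calc Z ≤ ∑ k, p k * ((1 - ℓ k / B) + ℓ k / B * Real.exp (-η * B)) :=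
              Finset.sum_le_sum fun k _ => hterm k
          _ = ∑ k, (p k - p k * ℓ k / B + p k * ℓ k / B * Real.exp (-η * B)) := by
              apply Finset.sum_congr rfl; intros; ring
          _ = (∑ k, p k) - (∑ k, p k * ℓ k) / B
                + (∑ k, p k * ℓ k) / B * Real.exp (-η * B) := by
              rw [Finset.sum_add_distrib, Finset.sum_sub_distrib, ← Finset.sum_div,
                ← Finset.sum_mul, ← Finset.sum_div]
          _ = 1 - m + m * Real.exp (-η * B) := by rw [hp_sum, hmdef]
      have hu : -η * B ≤ 0 := by nlinarith
      have hkey := hoeffding_scalar m hm0 hm1 (-η * B) hu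
      have hlog := Real.log_le_log hZpos hZle
      have heq1 : m * (-η * B) = -η * ∑ k, p k * ℓ k := by
        rw [hmdef]; field_simp
      have heq2 : (-η * B) ^ 2 / 8 = η ^ 2 * B ^ 2 / 8 := by ring
      calc Real.log Z ≤ Real.log (1 - m + m * Real.exp (-η * B)) := hlog
        _ ≤ m * (-η * B) + (-η * B) ^ 2 / 8 := hkey
        _ = -η * ∑ k, p k * ℓ k + η ^ 2 * B ^ 2 / 8 := by rw [heq1, heq2]
  have hgibbs := gibbs_bound η hη ℓ p q hp_nonneg hp_sum hq_nonneg hq_sum habs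
  rw [← hZdef] at hgibbs
  set KL : ℝ := ∑ k, q k * Real.log (q k / p k)
  have hcomb : η * (∑ k, p k * ℓ k)
      ≤ η * (∑ k, q k * ℓ k) + KL + η ^ 2 * B ^ 2 / 8 := by linarith
  rw [← mul_le_mul_iff_right₀ hη]
  calc η * ∑ k, p k * ℓ k
      ≤ η * (∑ k, q k * ℓ k) + KL + η ^ 2 * B ^ 2 / 8 := hcomb
    _ = η * (∑ k, q k * ℓ k + 1 / η * KL + η * B ^ 2 / 8) := by
        field_simp

end

/-- Cumulative regret bound: summing the single-time-step bound over
`t = 0, …, T-1`. -/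
theorem cumulative_regret_bound
    {K : Type*} [Fintype K] [Nonempty K]
    (T : ℕ) (hT : 0 < T)
    (η B : ℝ) (hη : 0 < η) (hB : 0 ≤ B)
    (ℓ : Fin T → K → ℝ) (hℓ : ∀ t k, 0 ≤ ℓ t k ∧ ℓ t k ≤ B)
    (p : Fin T → K → ℝ)
    (hp_nonneg : ∀ t k, 0 ≤ p t k) (hp_sum : ∀ t, ∑ k, p t k = 1)
    (q : K → ℝ)
    (hq_nonneg : ∀ k, 0 ≤ q k) (hq_sum : ∑ k, q k = 1)
    (habs : ∀ t k, 0 < q k → 0 < p t k) :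
    (∑ t, ∑ k, p t k * ℓ t k)
      ≤ (∑ t, ∑ k, q k * ℓ t k)
        + (1 / η) * (∑ t, ∑ k, q k * Real.log (q k / p t k))
        + (T : ℝ) * η * B ^ 2 / 8 := by
  have hstep : ∀ t : Fin T, ∑ k, p t k * ℓ t k
      ≤ ∑ k, q k * ℓ t k + (1 / η) * ∑ k, q k * Real.log (q k / p t k)
        + η * B ^ 2 / 8 := fun t =>
    step_bound η B hη hB (ℓ t) (p t) q (hℓ t) (hp_nonneg t) (hp_sum t)
      hq_nonneg hq_sum (habs t)
  calc (∑ t, ∑ k, p t k * ℓ t k)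
      ≤ ∑ t, (∑ k, q k * ℓ t k + (1 / η) * ∑ k, q k * Real.log (q k / p t k)
          + η * B ^ 2 / 8) := Finset.sum_le_sum fun t _ => hstep t
    _ = (∑ t, ∑ k, q k * ℓ t k)
        + (1 / η) * (∑ t, ∑ k, q k * Real.log (q k / p t k))
        + (T : ℝ) * η * B ^ 2 / 8 := by
        rw [Finset.sum_add_distrib, Finset.sum_add_distrib, Finset.sum_const,
          ← Finset.mul_sum]
        simp [Fintype.card_fin]
        ring
end
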